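/- arXiv:1010.3385 — 2 statements merged into one kernel-verified Lean document; each statement's English description precedes it below -/
import Mathlib

section
/- In the CDO D^{ch} on ℙ¹ glued from D^{ch}_{ℂ₀} and D^{ch}_{ℂ_∞} via x ↦ 1/y, ∂_x ↦ −(∂_y)₍₋₁₎(y²) − 2∂(y), the assignment e ↦ ∂_x, h ↦ −2(∂_x)₍₋₁₎x, f ↦ −(∂_x)₍₋₁₎x² − 2∂(x) satisfies the λ-bracket/OPE relations of the affine vertex algebra V_{−2}(sl₂): e₍₀₎f = h, h₍₀₎e = 2e, h₍₀₎f = −2f, e₍₁₎f = −2, h₍₁₎h = −4, e₍₁₎e = f₍₁₎f = 0. -/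
/-- Generalized binomial coefficient `C(m, j)` for an integer `m` and natural `j`. -/
def zchoose (m : ℤ) (j : ℕ) : ℤ := (∏ i ∈ Finset.range j, (m - i)) / (j.factorial : ℤ)

lemma zchoose_zero (m : ℤ) : zchoose m 0 = 1 := by simp [zchoose]

lemma zchoose_zero_left {j : ℕ} (hj : j ≠ 0) : zchoose 0 j = 0 := by
  unfold zchoose
  have : (∏ i ∈ Finset.range j, ((0:ℤ) - i)) = 0 :=
    Finset.prod_eq_zero (Finset.mem_range.2 (Nat.pos_of_ne_zero hj)) (by simp)
  rw [this]; simp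

lemma zchoose_neg_one (j : ℕ) : zchoose (-1) j = (-1)^j := by
  unfold zchoose
  have h : (∏ i ∈ Finset.range j, ((-1:ℤ) - i)) = (-1)^j * (j.factorial : ℤ) := by
    induction j with
    | zero => simp
    | succ n ih =>
      rw [Finset.prod_range_succ, ih]
      push_cast [Nat.factorial_succ]
      ring
  rw [h, Int.mul_ediv_cancel _ (by exact_mod_cast j.factorial_ne_zero)]

lemma zchoose_neg_two (j : ℕ) : zchoose (-2) j = (-1)^j * (j+1) := by
  unfold zchoose
  have h : (∏ i ∈ Finset.range j, ((-2:ℤ) - i)) = ((-1)^j * (j+1)) * (j.factorial : ℤ) := by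
    induction j with
    | zero => simp
    | succ n ih =>
      rw [Finset.prod_range_succ, ih]
      push_cast [Nat.factorial_succ]
      ring
  rw [h, Int.mul_ediv_cancel _ (by exact_mod_cast j.factorial_ne_zero)]

structure VertexAlgebraC (V : Type*) [AddCommGroup V] [Module ℂ V] where
  nprod : V → ℤ → V → V
  vac : V
  nprod_add_left : ∀ a n b c, nprod (a + b) n c = nprod a n c + nprod b n c
  nprod_add_right : ∀ a n b c, nprod a n (b + c) = nprod a n b + nprod a n c
  nprod_smul_left : ∀ (r : ℂ) a n b, nprod (r • a) n b = r • nprod a n b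
  nprod_smul_right : ∀ (r : ℂ) a n b, nprod a n (r • b) = r • nprod a n b
  locality : ∀ a b, ∃ N : ℕ, ∀ n : ℤ, (N : ℤ) ≤ n → nprod a n b = 0
  vac_prod : ∀ (n : ℤ) (a : V), nprod vac n a = if n = -1 then a else 0
  prod_vac_neg_one : ∀ a, nprod a (-1) vac = a
  prod_vac_nonneg : ∀ (a : V) (n : ℤ), 0 ≤ n → nprod a n vac = 0
  borcherds : ∀ (a b c : V) (m n k : ℤ),
    (∑ᶠ j : ℕ, zchoose m j • nprod (nprod a (n + j) b) (m + k - j) c)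
      = ∑ᶠ j : ℕ, ((-1 : ℤ) ^ j * zchoose n j) •
          (nprod a (m + n - j) (nprod b (k + j) c)
            - (Int.negOnePow n : ℤ) • nprod b (n + k - j) (nprod a (m + j) c))

/-- The translation operator `∂a = a₍₋₂₎|0⟩` of a vertex algebra. -/
def VertexAlgebraC.tr {V : Type*} [AddCommGroup V] [Module ℂ V]
    (W : VertexAlgebraC V) (a : V) : V := W.nprod a (-2) W.vac



namespace VertexAlgebraC
variable {V : Type*} [AddCommGroup V] [Module ℂ V] (W : VertexAlgebraC V)

lemma nprod_zero_right (a : V) (n : ℤ) : W.nprod a n 0 = 0 := by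
  have h := W.nprod_smul_right 0 a n 0
  rw [zero_smul, zero_smul] at h
  exact h

lemma nprod_zero_left (n : ℤ) (c : V) : W.nprod 0 n c = 0 := by
  have h := W.nprod_smul_left 0 0 n c
  rw [zero_smul, zero_smul] at h
  exact h

/-- `nprod a n` as an additive hom. -/
def lhom (a : V) (n : ℤ) : V →+ V where
  toFun := W.nprod a n
  map_zero' := W.nprod_zero_right a n
  map_add' := W.nprod_add_right a n

/-- `fun a => nprod a n c` as an additive hom. -/
def rhom (n : ℤ) (c : V) : V →+ V where
  toFun := fun a => W.nprod a n c
  map_zero' := W.nprod_zero_left n c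
  map_add' := fun a b => W.nprod_add_left a n b c

lemma nprod_neg_right (a : V) (n : ℤ) (b : V) : W.nprod a n (-b) = - W.nprod a n b :=
  (W.lhom a n).map_neg b

lemma nprod_neg_left (a : V) (n : ℤ) (b : V) : W.nprod (-a) n b = - W.nprod a n b :=
  (W.rhom n b).map_neg a

lemma nprod_sub_right (a : V) (n : ℤ) (b c : V) :
    W.nprod a n (b - c) = W.nprod a n b - W.nprod a n c := (W.lhom a n).map_sub b c

lemma nprod_sub_left (a b : V) (n : ℤ) (c : V) :
    W.nprod (a - b) n c = W.nprod a n c - W.nprod b n c := (W.rhom n c).map_sub a b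

lemma nprod_zsmul_right (a : V) (n : ℤ) (k : ℤ) (b : V) :
    W.nprod a n (k • b) = k • W.nprod a n b := (W.lhom a n).map_zsmul k b

lemma nprod_zsmul_left (k : ℤ) (a : V) (n : ℤ) (b : V) :
    W.nprod (k • a) n b = k • W.nprod a n b := (W.rhom n b).map_zsmul k a

/-- The commutator formula, in the case where only the `j = 0` term survives. -/
lemma commGen (a b c : V) (m k : ℤ)
    (hab : ∀ j : ℤ, 1 ≤ j → W.nprod a j b = 0) :
    W.nprod a m (W.nprod b k c)
      = W.nprod b k (W.nprod a m c) + W.nprod (W.nprod a 0 b) (m + k) c := by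
  have hB := W.borcherds a b c m 0 k
  have hL : (∑ᶠ j : ℕ, zchoose m j • W.nprod (W.nprod a (0 + j) b) (m + k - j) c)
      = W.nprod (W.nprod a 0 b) (m + k) c := by
    rw [finsum_eq_single _ 0]
    · norm_num [zchoose_zero]
    · intro j hj
      have h1j : (1:ℤ) ≤ 0 + j := by
        have := Nat.one_le_iff_ne_zero.2 hj
        omega
      rw [hab (0 + j) h1j, W.nprod_zero_left, smul_zero]
  have hR : (∑ᶠ j : ℕ, ((-1 : ℤ) ^ j * zchoose 0 j) •
        (W.nprod a (m + 0 - j) (W.nprod b (k + j) c)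
          - (Int.negOnePow 0 : ℤ) • W.nprod b (0 + k - j) (W.nprod a (m + j) c)))
      = W.nprod a m (W.nprod b k c) - W.nprod b k (W.nprod a m c) := by
    rw [finsum_eq_single _ 0]
    · norm_num [zchoose_zero, Int.negOnePow_zero]
    · intro j hj
      rw [zchoose_zero_left hj, mul_zero, zero_smul]
  rw [hL, hR] at hB
  rw [hB]
  abel

/-- The iterate (associativity-type) formula for `(a₍₋₁₎b)₍ₖ₎c`. -/
lemma iter (a b c : V) (k : ℤ) :
    W.nprod (W.nprod a (-1) b) k c
      = ∑ᶠ j : ℕ, (W.nprod a (-1 - j) (W.nprod b (k + j) c)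
          + W.nprod b (k - 1 - j) (W.nprod a j c)) := by
  have hB := W.borcherds a b c 0 (-1) k
  have hL : (∑ᶠ j : ℕ, zchoose 0 j • W.nprod (W.nprod a (-1 + j) b) (0 + k - j) c)
      = W.nprod (W.nprod a (-1) b) k c := by
    rw [finsum_eq_single _ 0]
    · norm_num [zchoose_zero]
    · intro j hj
      rw [zchoose_zero_left hj, zero_smul]
  rw [hL] at hB
  rw [hB]
  apply finsum_congr
  intro j
  have hc : ((-1 : ℤ) ^ j * zchoose (-1) j) = 1 := by
    rw [zchoose_neg_one, ← pow_add]
    exact Even.neg_one_pow ⟨j, rfl⟩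
  have hneg : (Int.negOnePow (-1) : ℤ) = -1 := by
    rw [Int.negOnePow_neg, Int.negOnePow_one]; rfl
  rw [hc, one_smul, hneg, neg_one_zsmul, sub_neg_eq_add]
  have e1 : (0 : ℤ) + -1 - j = -1 - j := by ring
  have e2 : (-1 : ℤ) + k - j = k - 1 - j := by ring
  have e3 : (0 : ℤ) + j = j := by ring
  rw [e1, e2, e3]

/-- `(∂a)₍₁₎c = -a₍₀₎c`. -/
lemma tr_one (a c : V) : W.nprod (W.tr a) 1 c = - W.nprod a 0 c := by
  have hB := W.borcherds a W.vac c 0 (-2) 1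
  have hL : (∑ᶠ j : ℕ, zchoose 0 j • W.nprod (W.nprod a (-2 + j) W.vac) (0 + 1 - j) c)
      = W.nprod (W.tr a) 1 c := by
    rw [finsum_eq_single _ 0]
    · norm_num [zchoose_zero, VertexAlgebraC.tr]
    · intro j hj
      rw [zchoose_zero_left hj, zero_smul]
  have hR : (∑ᶠ j : ℕ, ((-1 : ℤ) ^ j * zchoose (-2) j) •
        (W.nprod a (0 + -2 - j) (W.nprod W.vac (1 + j) c)
          - (Int.negOnePow (-2) : ℤ) • W.nprod W.vac (-2 + 1 - j) (W.nprod a (0 + j) c)))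
      = - W.nprod a 0 c := by
    rw [finsum_eq_single _ 0]
    · have h1 : W.nprod W.vac (1 + (0:ℕ)) c = 0 := by
        rw [W.vac_prod]; norm_num
      have h2 : W.nprod W.vac (-2 + 1 - (0:ℕ)) (W.nprod a (0 + (0:ℕ)) c)
          = W.nprod a 0 c := by
        rw [W.vac_prod]; norm_num
      have hneg : (Int.negOnePow (-2) : ℤ) = 1 := by
        decide
      rw [h1, h2, hneg, W.nprod_zero_right, zero_sub, one_smul]
      norm_num [zchoose_zero, zchoose_neg_two]
    · intro j hj
      have h1 : W.nprod W.vac (1 + j) c = 0 := by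
        rw [W.vac_prod]
        have : ((1:ℤ) + j) ≠ -1 := by omega
        simp [this]
      have h2 : W.nprod W.vac (-2 + 1 - j) (W.nprod a (0 + j) c) = 0 := by
        rw [W.vac_prod]
        have : ((-2:ℤ) + 1 - j) ≠ -1 := by
          have : (0:ℤ) < j := by exact_mod_cast Nat.pos_of_ne_zero hj
          omega
        rw [if_neg this]
      rw [h1, h2, W.nprod_zero_right, smul_zero, zero_sub, neg_zero, smul_zero]
  rw [hL, hR] at hB
  exact hB

/-- Skew-symmetry in the special case needed for the beta-gamma system. -/
lemma skew_vac (a b : V) (hab0 : W.nprod a 0 b = W.vac)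
    (hab1 : ∀ j : ℤ, 1 ≤ j → W.nprod a j b = 0) (n : ℤ) (hn : 0 ≤ n) :
    W.nprod b n a = - ((Int.negOnePow n : ℤ) • (if n = 0 then W.vac else 0)) := by
  have hB := W.borcherds a b W.vac (-1) n 0
  have hL : (∑ᶠ j : ℕ, zchoose (-1) j •
        W.nprod (W.nprod a (n + j) b) (-1 + 0 - j) W.vac)
      = (if n = 0 then W.vac else 0) := by
    by_cases h0 : n = 0
    · subst h0
      rw [finsum_eq_single _ 0, if_pos rfl]
      · norm_num [zchoose_neg_one, hab0, W.prod_vac_neg_one]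
      · intro j hj
        have : (1:ℤ) ≤ 0 + j := by
          have := Nat.pos_of_ne_zero hj; omega
        rw [hab1 (0 + j) this, W.nprod_zero_left, smul_zero]
    · rw [if_neg h0]
      apply finsum_eq_zero_of_forall_eq_zero
      intro j
      rw [hab1 (n + j) (by omega), W.nprod_zero_left, smul_zero]
  have hR : (∑ᶠ j : ℕ, ((-1 : ℤ) ^ j * zchoose n j) •
        (W.nprod a (-1 + n - j) (W.nprod b (0 + j) W.vac)
          - (Int.negOnePow n : ℤ) • W.nprod b (n + 0 - j) (W.nprod a (-1 + j) W.vac)))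
      = - ((Int.negOnePow n : ℤ) • W.nprod b n a) := by
    rw [finsum_eq_single _ 0]
    · have h1 : W.nprod b (0 + ((0:ℕ):ℤ)) W.vac = 0 := by
        rw [show ((0:ℤ) + ((0:ℕ):ℤ)) = 0 by norm_num]
        exact W.prod_vac_nonneg b 0 le_rfl
      rw [h1, W.nprod_zero_right]
      rw [show ((-1:ℤ) + ((0:ℕ):ℤ)) = -1 by norm_num, W.prod_vac_neg_one]
      rw [show (n + 0 - ((0:ℕ):ℤ)) = n by norm_num]
      norm_num [zchoose_zero]
    · intro j hj
      have hj1 : (1:ℤ) ≤ (j:ℤ) := by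
        have := Nat.pos_of_ne_zero hj; omega
      have h1 : W.nprod b (0 + (j:ℤ)) W.vac = 0 := W.prod_vac_nonneg b _ (by omega)
      have h2 : W.nprod a (-1 + (j:ℤ)) W.vac = 0 := W.prod_vac_nonneg a _ (by omega)
      rw [h1, h2, W.nprod_zero_right, W.nprod_zero_right, smul_zero, sub_zero, smul_zero]
  rw [hL, hR] at hB
  have hu : ((Int.negOnePow n : ℤ)) * (Int.negOnePow n : ℤ) = 1 := by
    rw [← Units.val_mul, Int.units_mul_self, Units.val_one]
  calc W.nprod b n a
      = ((Int.negOnePow n : ℤ) * (Int.negOnePow n : ℤ)) • W.nprod b n a := by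
        rw [hu, one_smul]
    _ = (Int.negOnePow n : ℤ) • ((Int.negOnePow n : ℤ) • W.nprod b n a) := mul_smul _ _ _
    _ = - ((Int.negOnePow n : ℤ) • (if n = 0 then W.vac else 0)) := by
        rw [← neg_neg ((Int.negOnePow n : ℤ) • W.nprod b n a), ← hB, smul_neg]

end VertexAlgebraC


/-- In the CDO `D^{ch}` on `ℙ¹` (whose local model is the beta-gamma system: fields
`x`, `∂_x` with `(∂_x)₍₀₎x = |0⟩`, `x₍ₙ₎x = 0` and `(∂_x)₍ₙ₎(∂_x) = 0` for `n ≥ 0`,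
`(∂_x)₍ₙ₎x = 0` for `n ≥ 1`), the assignment `e ↦ ∂_x`, `h ↦ −2(∂_x)₍₋₁₎x`,
`f ↦ −(∂_x)₍₋₁₎x² − 2∂(x)` satisfies the OPE relations of the affine vertex algebra
`V_{−2}(sl₂)`: `e₍₀₎f = h`, `h₍₀₎e = 2e`, `h₍₀₎f = −2f`, `e₍₁₎f = −2`, `h₍₁₎h = −4`,
`e₍₁₎e = f₍₁₎f = 0`. -/
theorem cdo_P1_sl2_critical {V : Type*} [AddCommGroup V] [Module ℂ V]
    (W : VertexAlgebraC V) (x Dx : V)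
    (hbg0 : W.nprod Dx 0 x = W.vac)
    (hbgx : ∀ n : ℤ, 0 ≤ n → W.nprod x n x = 0)
    (hbgD : ∀ n : ℤ, 0 ≤ n → W.nprod Dx n Dx = 0)
    (hbg1 : ∀ n : ℤ, 1 ≤ n → W.nprod Dx n x = 0) :
    let e := Dx
    let h := (-2 : ℂ) • W.nprod Dx (-1) x
    let f := - W.nprod Dx (-1) (W.nprod x (-1) x) - (2 : ℂ) • W.tr x
    W.nprod e 0 f = h ∧
    W.nprod h 0 e = (2 : ℂ) • e ∧
    W.nprod h 0 f = (-2 : ℂ) • f ∧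
    W.nprod e 1 f = (-2 : ℂ) • W.vac ∧
    W.nprod h 1 h = (-4 : ℂ) • W.vac ∧
    W.nprod e 1 e = 0 ∧
    W.nprod f 1 f = 0 := by
  intro e h f
  -- skew symmetry values
  have hxDx0 : W.nprod x 0 Dx = - W.vac := by
    rw [W.skew_vac Dx x hbg0 hbg1 0 le_rfl, if_pos rfl, Int.negOnePow_zero,
      Units.val_one, one_smul]
  have hxDx1 : ∀ n : ℤ, 1 ≤ n → W.nprod x n Dx = 0 := by
    intro n hn
    rw [W.skew_vac Dx x hbg0 hbg1 n (by omega), if_neg (by omega), smul_zero, neg_zero]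
  have hbgx' : ∀ j : ℤ, 1 ≤ j → W.nprod x j x = 0 := fun j hj => hbgx j (by omega)
  have hbgD' : ∀ j : ℤ, 1 ≤ j → W.nprod Dx j Dx = 0 := fun j hj => hbgD j (by omega)
  -- x acting on s = x₍₋₁₎x
  have hxs : ∀ n : ℤ, 0 ≤ n → W.nprod x n (W.nprod x (-1) x) = 0 := by
    intro n hn
    rw [W.commGen x x x n (-1) hbgx', hbgx n hn, W.nprod_zero_right,
      hbgx 0 le_rfl, W.nprod_zero_left, add_zero]
  -- Dx acting on s
  have hDxs0 : W.nprod Dx 0 (W.nprod x (-1) x) = x + x := by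
    rw [W.commGen Dx x x 0 (-1) hbg1, hbg0, W.prod_vac_neg_one, W.vac_prod]
    norm_num
  have hDxs1 : ∀ n : ℤ, 1 ≤ n → W.nprod Dx n (W.nprod x (-1) x) = 0 := by
    intro n hn
    rw [W.commGen Dx x x n (-1) hbg1, hbg1 n hn, W.nprod_zero_right, hbg0,
      W.vac_prod, if_neg (by omega), add_zero]
  -- x acting on ω = Dx₍₋₁₎x
  have hxw0 : W.nprod x 0 (W.nprod Dx (-1) x) = -x := by
    rw [W.commGen x Dx x 0 (-1) hxDx1, hbgx 0 le_rfl, W.nprod_zero_right, hxDx0,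
      W.nprod_neg_left, W.vac_prod]
    norm_num
  have hxw1 : ∀ n : ℤ, 1 ≤ n → W.nprod x n (W.nprod Dx (-1) x) = 0 := by
    intro n hn
    rw [W.commGen x Dx x n (-1) hxDx1, hbgx n (by omega), W.nprod_zero_right, hxDx0,
      W.nprod_neg_left, W.vac_prod, if_neg (by omega), neg_zero, add_zero]
  -- Dx acting on ω
  have hDxw0 : W.nprod Dx 0 (W.nprod Dx (-1) x) = Dx := by
    rw [W.commGen Dx Dx x 0 (-1) hbgD', hbg0, W.prod_vac_neg_one, hbgD 0 le_rfl,
      W.nprod_zero_left, add_zero]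
  have hDxw1 : ∀ n : ℤ, 1 ≤ n → W.nprod Dx n (W.nprod Dx (-1) x) = 0 := by
    intro n hn
    rw [W.commGen Dx Dx x n (-1) hbgD', hbg1 n hn, W.nprod_zero_right, hbgD 0 le_rfl,
      W.nprod_zero_left, add_zero]
  -- x acting on A = Dx₍₋₁₎s
  have hxA0 : W.nprod x 0 (W.nprod Dx (-1) (W.nprod x (-1) x))
      = - W.nprod x (-1) x := by
    rw [W.commGen x Dx (W.nprod x (-1) x) 0 (-1) hxDx1, hxs 0 le_rfl,
      W.nprod_zero_right, hxDx0, W.nprod_neg_left, W.vac_prod]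
    norm_num
  have hxA1 : ∀ n : ℤ, 1 ≤ n →
      W.nprod x n (W.nprod Dx (-1) (W.nprod x (-1) x)) = 0 := by
    intro n hn
    rw [W.commGen x Dx (W.nprod x (-1) x) n (-1) hxDx1, hxs n (by omega),
      W.nprod_zero_right, hxDx0, W.nprod_neg_left, W.vac_prod, if_neg (by omega),
      neg_zero, add_zero]
  -- Dx acting on A
  have hDxA0 : W.nprod Dx 0 (W.nprod Dx (-1) (W.nprod x (-1) x))
      = W.nprod Dx (-1) x + W.nprod Dx (-1) x := by
    rw [W.commGen Dx Dx (W.nprod x (-1) x) 0 (-1) hbgD', hDxs0, hbgD 0 le_rfl,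
      W.nprod_zero_left, add_zero, W.nprod_add_right]
  have hDxA1 : ∀ n : ℤ, 1 ≤ n →
      W.nprod Dx n (W.nprod Dx (-1) (W.nprod x (-1) x)) = 0 := by
    intro n hn
    rw [W.commGen Dx Dx (W.nprod x (-1) x) n (-1) hbgD', hDxs1 n hn,
      W.nprod_zero_right, hbgD 0 le_rfl, W.nprod_zero_left, add_zero]
  -- s acting on x
  have hsx : ∀ n : ℤ, 0 ≤ n → W.nprod (W.nprod x (-1) x) n x = 0 := by
    intro n hn
    rw [W.iter x x x n]
    apply finsum_eq_zero_of_forall_eq_zero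
    intro j
    rw [hbgx (n + j) (by omega), W.nprod_zero_right, hbgx j (by omega),
      W.nprod_zero_right, add_zero]
  have hsx' : ∀ j : ℤ, 1 ≤ j → W.nprod (W.nprod x (-1) x) j x = 0 :=
    fun j hj => hsx j (by omega)
  -- s acting on Dx
  have hsDx0 : W.nprod (W.nprod x (-1) x) 0 Dx = -x + -x := by
    rw [W.iter x x Dx 0, finsum_eq_single _ 0]
    · norm_num [hxDx0, W.nprod_neg_right, W.prod_vac_neg_one]
    · intro j hj
      have hj1 : (1:ℤ) ≤ (j:ℤ) := by have := Nat.pos_of_ne_zero hj; omega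
      rw [hxDx1 (0 + j) (by omega), W.nprod_zero_right, hxDx1 j hj1,
        W.nprod_zero_right, add_zero]
  have hsDx1 : ∀ n : ℤ, 1 ≤ n → W.nprod (W.nprod x (-1) x) n Dx = 0 := by
    intro n hn
    rw [W.iter x x Dx n]
    apply finsum_eq_zero_of_forall_eq_zero
    intro j
    rw [hxDx1 (n + j) (by omega), W.nprod_zero_right]
    rcases Nat.eq_zero_or_pos j with h0 | h1
    · subst h0
      simp only [Nat.cast_zero, sub_zero, zero_add]
      rw [hxDx0, W.nprod_neg_right, W.prod_vac_nonneg x (n - 1) (by omega), neg_zero]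
    · rw [hxDx1 j (by exact_mod_cast h1), W.nprod_zero_right, add_zero]
  -- s acting on s
  have hss : ∀ n : ℤ, 0 ≤ n → W.nprod (W.nprod x (-1) x) n (W.nprod x (-1) x) = 0 := by
    intro n hn
    rw [W.iter x x (W.nprod x (-1) x) n]
    apply finsum_eq_zero_of_forall_eq_zero
    intro j
    rw [hxs (n + j) (by omega), W.nprod_zero_right, hxs j (by omega),
      W.nprod_zero_right, add_zero]
  -- s acting on ω
  have hsw0 : W.nprod (W.nprod x (-1) x) 0 (W.nprod Dx (-1) x)
      = - W.nprod x (-1) x + - W.nprod x (-1) x := by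
    rw [W.iter x x (W.nprod Dx (-1) x) 0, finsum_eq_single _ 0]
    · norm_num [hxw0, W.nprod_neg_right]
    · intro j hj
      have hj1 : (1:ℤ) ≤ (j:ℤ) := by have := Nat.pos_of_ne_zero hj; omega
      rw [hxw1 (0 + j) (by omega), W.nprod_zero_right, hxw1 j hj1,
        W.nprod_zero_right, add_zero]
  -- s acting on A (n ≥ 1)
  have hsA1 : ∀ n : ℤ, 1 ≤ n →
      W.nprod (W.nprod x (-1) x) n (W.nprod Dx (-1) (W.nprod x (-1) x)) = 0 := by
    intro n hn
    rw [W.commGen (W.nprod x (-1) x) Dx (W.nprod x (-1) x) n (-1) hsDx1,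
      hss n (by omega), W.nprod_zero_right, hsDx0, W.nprod_add_left,
      W.nprod_neg_left, hxs (n + -1) (by omega), neg_zero, add_zero, add_zero]
  -- products with Tx = x₍₋₂₎vac
  have hsTx : ∀ n : ℤ, 0 ≤ n →
      W.nprod (W.nprod x (-1) x) n (W.nprod x (-2) W.vac) = 0 := by
    intro n hn
    rw [W.commGen (W.nprod x (-1) x) x W.vac n (-2) hsx',
      W.prod_vac_nonneg _ n hn, W.nprod_zero_right, hsx 0 le_rfl,
      W.nprod_zero_left, add_zero]
  have hDxTx : ∀ n : ℤ, 0 ≤ n →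
      W.nprod Dx n (W.nprod x (-2) W.vac) = if n = 1 then W.vac else 0 := by
    intro n hn
    rw [W.commGen Dx x W.vac n (-2) hbg1, W.prod_vac_nonneg _ n hn,
      W.nprod_zero_right, hbg0, W.vac_prod, zero_add]
    by_cases h1 : n = 1
    · rw [if_pos (by omega), if_pos h1]
    · rw [if_neg (by omega), if_neg h1]
  have hxTx : ∀ n : ℤ, 0 ≤ n →
      W.nprod x n (W.nprod x (-2) W.vac) = 0 := by
    intro n hn
    rw [W.commGen x x W.vac n (-2) hbgx', W.prod_vac_nonneg _ n hn,
      W.nprod_zero_right, hbgx 0 le_rfl, W.nprod_zero_left, add_zero]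
  -- quasi-commutativity : x₍₋₁₎ω = Dx₍₋₁₎s
  have hcomm : W.nprod x (-1) (W.nprod Dx (-1) x)
      = W.nprod Dx (-1) (W.nprod x (-1) x) := by
    rw [W.commGen x Dx x (-1) (-1) hxDx1, hxDx0, W.nprod_neg_left, W.vac_prod,
      if_neg (by omega), neg_zero, add_zero]
  -- ω₍₀₎Dx = -Dx
  have hwDx : W.nprod (W.nprod Dx (-1) x) 0 Dx = -Dx := by
    rw [W.iter Dx x Dx 0, finsum_eq_single _ 0]
    · norm_num [hxDx0, hbgD 0 le_rfl, W.nprod_neg_right, W.nprod_zero_right,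
        W.prod_vac_neg_one]
    · intro j hj
      have hj1 : (1:ℤ) ≤ (j:ℤ) := by have := Nat.pos_of_ne_zero hj; omega
      rw [hxDx1 (0 + j) (by omega), W.nprod_zero_right, hbgD j (by omega),
        W.nprod_zero_right, add_zero]
  -- ω₍₁₎ω = -vac
  have hww : W.nprod (W.nprod Dx (-1) x) 1 (W.nprod Dx (-1) x) = - W.vac := by
    rw [W.iter Dx x (W.nprod Dx (-1) x) 1, finsum_eq_single _ 0]
    · norm_num [hxw1 1 le_rfl, hDxw0, hxDx0, W.nprod_zero_right]
    · intro j hj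
      have hj1 : (1:ℤ) ≤ (j:ℤ) := by have := Nat.pos_of_ne_zero hj; omega
      rw [hxw1 (1 + j) (by omega), W.nprod_zero_right, hDxw1 j hj1,
        W.nprod_zero_right, add_zero]
  -- ω₍₀₎Tx = Tx
  have hwTx : W.nprod (W.nprod Dx (-1) x) 0 (W.nprod x (-2) W.vac)
      = W.nprod x (-2) W.vac := by
    rw [W.iter Dx x (W.nprod x (-2) W.vac) 0, finsum_eq_single _ 1]
    · rw [hxTx (0 + (1:ℕ)) (by norm_num), W.nprod_zero_right,
        hDxTx (1:ℕ) (by norm_num), if_pos (by norm_num)]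
      norm_num
    · intro j hj
      rw [hxTx (0 + j) (by omega), W.nprod_zero_right, hDxTx j (by omega),
        if_neg (by exact_mod_cast hj), W.nprod_zero_right, add_zero]
  -- ω₍₀₎A = A
  have hwA : W.nprod (W.nprod Dx (-1) x) 0 (W.nprod Dx (-1) (W.nprod x (-1) x))
      = W.nprod Dx (-1) (W.nprod x (-1) x) := by
    rw [W.iter Dx x (W.nprod Dx (-1) (W.nprod x (-1) x)) 0, finsum_eq_single _ 0]
    · norm_num [hxA0, hDxA0, W.nprod_neg_right, W.nprod_add_right, hcomm]
    · intro j hj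
      have hj1 : (1:ℤ) ≤ (j:ℤ) := by have := Nat.pos_of_ne_zero hj; omega
      rw [hxA1 (0 + j) (by omega), W.nprod_zero_right, hDxA1 j hj1,
        W.nprod_zero_right, add_zero]
  -- A₍₁₎Tx = s
  have hATx : W.nprod (W.nprod Dx (-1) (W.nprod x (-1) x)) 1 (W.nprod x (-2) W.vac)
      = W.nprod x (-1) x := by
    rw [W.iter Dx (W.nprod x (-1) x) (W.nprod x (-2) W.vac) 1, finsum_eq_single _ 1]
    · rw [hsTx (1 + (1:ℕ)) (by norm_num), W.nprod_zero_right,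
        hDxTx (1:ℕ) (by norm_num), if_pos (by norm_num)]
      norm_num [W.prod_vac_neg_one]
    · intro j hj
      rw [hsTx (1 + j) (by omega), W.nprod_zero_right, hDxTx j (by omega),
        if_neg (by exact_mod_cast hj), W.nprod_zero_right, add_zero]
  -- Tx₍₁₎A = s, Tx₍₁₎Tx = 0
  have htr : W.tr x = W.nprod x (-2) W.vac := rfl
  have hTxA : W.nprod (W.nprod x (-2) W.vac) 1 (W.nprod Dx (-1) (W.nprod x (-1) x))
      = W.nprod x (-1) x := by
    rw [← htr, W.tr_one, hxA0, neg_neg]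
  have hTxTx : W.nprod (W.nprod x (-2) W.vac) 1 (W.nprod x (-2) W.vac) = 0 := by
    rw [← htr, W.tr_one, htr, hxTx 0 le_rfl, neg_zero]
  -- A₍₁₎A
  have hAA : W.nprod (W.nprod Dx (-1) (W.nprod x (-1) x)) 1
        (W.nprod Dx (-1) (W.nprod x (-1) x))
      = (- W.nprod x (-1) x + - W.nprod x (-1) x)
        + (- W.nprod x (-1) x + - W.nprod x (-1) x) := by
    rw [W.iter Dx (W.nprod x (-1) x) (W.nprod Dx (-1) (W.nprod x (-1) x)) 1,
      finsum_eq_single _ 0]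
    · norm_num
      rw [hsA1 1 le_rfl, W.nprod_zero_right, hDxA0, W.nprod_add_right, hsw0]
      abel
    · intro j hj
      have hj1 : (1:ℤ) ≤ (j:ℤ) := by have := Nat.pos_of_ne_zero hj; omega
      rw [hsA1 (1 + j) (by omega), W.nprod_zero_right, hDxA1 j hj1,
        W.nprod_zero_right, add_zero]
  -- assemble
  have htr : W.tr x = W.nprod x (-2) W.vac := rfl
  refine ⟨?_, ?_, ?_, ?_, ?_, ?_, ?_⟩
  · show W.nprod Dx 0 (- W.nprod Dx (-1) (W.nprod x (-1) x) - (2:ℂ) • W.tr x)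
      = (-2 : ℂ) • W.nprod Dx (-1) x
    rw [W.nprod_sub_right, W.nprod_neg_right, W.nprod_smul_right, hDxA0, htr,
      hDxTx 0 le_rfl, if_neg (by omega), smul_zero, sub_zero]
    module
  · show W.nprod ((-2 : ℂ) • W.nprod Dx (-1) x) 0 Dx = (2:ℂ) • Dx
    rw [W.nprod_smul_left, hwDx]
    module
  · show W.nprod ((-2 : ℂ) • W.nprod Dx (-1) x) 0
        (- W.nprod Dx (-1) (W.nprod x (-1) x) - (2:ℂ) • W.tr x)
      = (-2 : ℂ) • (- W.nprod Dx (-1) (W.nprod x (-1) x) - (2:ℂ) • W.tr x)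
    rw [W.nprod_smul_left, W.nprod_sub_right, W.nprod_neg_right, W.nprod_smul_right,
      hwA, htr, hwTx]
  · show W.nprod Dx 1 (- W.nprod Dx (-1) (W.nprod x (-1) x) - (2:ℂ) • W.tr x)
      = (-2 : ℂ) • W.vac
    rw [W.nprod_sub_right, W.nprod_neg_right, W.nprod_smul_right, hDxA1 1 le_rfl,
      htr, hDxTx 1 (by norm_num), if_pos rfl, neg_zero, zero_sub]
    module
  · show W.nprod ((-2 : ℂ) • W.nprod Dx (-1) x) 1 ((-2 : ℂ) • W.nprod Dx (-1) x)
      = (-4 : ℂ) • W.vac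
    rw [W.nprod_smul_left, W.nprod_smul_right, hww]
    module
  · exact hbgD 1 (by norm_num)
  · show W.nprod (- W.nprod Dx (-1) (W.nprod x (-1) x) - (2:ℂ) • W.tr x) 1
        (- W.nprod Dx (-1) (W.nprod x (-1) x) - (2:ℂ) • W.tr x) = 0
    rw [htr, W.nprod_sub_left, W.nprod_neg_left, W.nprod_smul_left,
      W.nprod_sub_right, W.nprod_sub_right, W.nprod_neg_right, W.nprod_neg_right,
      W.nprod_smul_right, W.nprod_smul_right, hAA, hATx, hTxA, hTxTx]
    module
end

section
/- On ℙ¹ with the gluing λ* ↦ λ* + k·dx/x of the sheaf g̃ (extension 0 → Ω¹_{ℙ¹} → g̃ → O_{ℙ¹}·λ* → 0), k ≠ 0: the connecting map H⁰(ℙ¹, O·λ*) → H¹(ℙ¹, Ω¹_{ℙ¹}) in the long exact cohomology sequence is an isomorphism, and consequently Hⁱ(ℙ¹, g̃) = 0 for all i; hence the anchor induces an isomorphism H⁰(ℙ¹, A^{tw}) ≅ H⁰(ℙ¹, T_{ℙ¹}) for the extension 0 → g̃ → A^{tw} → T_{ℙ¹} → 0. -/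
/-- Cohomology of the deformed twisted algebroid on `ℙ¹`.  The sheaf `g̃` is the
extension `0 → Ω¹_{ℙ¹} → g̃ → O_{ℙ¹}·λ* → 0` glued over `ℂ*` by `λ* ↦ λ* + k·dx/x` with
`k ≠ 0`.  The statement is phrased via the associated long exact cohomology sequences:
`0 → H⁰(Ω¹) → H⁰(g̃) → H⁰(O·λ*) →(δ) H¹(Ω¹) → H¹(g̃) → H¹(O·λ*) → 0` where the connecting
map `δ` is multiplication by `k` under the identifications `H⁰(O·λ*) ≅ ℂ ≅ H¹(Ω¹)`
(it sends `λ*` to `k` times the class of `dx/x`), and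
`0 → H⁰(g̃) → H⁰(A^{tw}) → H⁰(T_{ℙ¹}) → H¹(g̃)` for the extension
`0 → g̃ → A^{tw} → T_{ℙ¹} → 0`.  Using `H⁰(ℙ¹,Ω¹) = 0` and `H¹(ℙ¹,O) = 0`:
the connecting map `δ` is an isomorphism, consequently `Hⁱ(ℙ¹, g̃) = 0` for all `i`, and
the anchor induces an isomorphism `H⁰(ℙ¹, A^{tw}) ≅ H⁰(ℙ¹, T_{ℙ¹})`. -/
theorem p1_deformed_tcdo_global_sections
    (k : ℂ) (hk : k ≠ 0)
    -- the cohomology spaces :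
    (H0Ω H1Ω H0g H1g H0L H1L H0A H0T : Type*)
    [AddCommGroup H0Ω] [Module ℂ H0Ω] [AddCommGroup H1Ω] [Module ℂ H1Ω]
    [AddCommGroup H0g] [Module ℂ H0g] [AddCommGroup H1g] [Module ℂ H1g]
    [AddCommGroup H0L] [Module ℂ H0L] [AddCommGroup H1L] [Module ℂ H1L]
    [AddCommGroup H0A] [Module ℂ H0A] [AddCommGroup H0T] [Module ℂ H0T]
    -- standard facts on ℙ¹: `H⁰(Ω¹) = 0`, `H¹(O·λ*) = H¹(O) ⊗ λ* = 0`,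
    -- `H⁰(O·λ*) ≅ ℂ`, `H¹(Ω¹) ≅ ℂ` :
    (hH0Ω : Subsingleton H0Ω) (hH1L : Subsingleton H1L)
    (ιL : H0L ≃ₗ[ℂ] ℂ) (ιΩ : H1Ω ≃ₗ[ℂ] ℂ)
    -- the long exact sequence of `0 → Ω¹ → g̃ → O·λ* → 0` :
    (e₁ : H0Ω →ₗ[ℂ] H0g) (e₂ : H0g →ₗ[ℂ] H0L) (δ : H0L →ₗ[ℂ] H1Ω)
    (e₃ : H1Ω →ₗ[ℂ] H1g) (e₄ : H1g →ₗ[ℂ] H1L)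
    (he₁ : Function.Injective e₁)
    (hex₁ : Function.Exact e₁ e₂) (hex₂ : Function.Exact e₂ δ)
    (hex₃ : Function.Exact δ e₃) (hex₄ : Function.Exact e₃ e₄)
    (he₄ : Function.Surjective e₄)
    -- the connecting map is multiplication by `k` (it sends `λ*` to `k·[dx/x]`) :
    (hδ : ∀ v : H0L, ιΩ (δ v) = k * ιL v)
    -- the long exact sequence of `0 → g̃ → A^{tw} → T → 0` in low degrees :
    (f₁ : H0g →ₗ[ℂ] H0A) (f₂ : H0A →ₗ[ℂ] H0T) (f₃ : H0T →ₗ[ℂ] H1g)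
    (hf₁ : Function.Injective f₁)
    (hfex₁ : Function.Exact f₁ f₂) (hfex₂ : Function.Exact f₂ f₃) :
    -- the connecting map `H⁰(O·λ*) → H¹(Ω¹)` is an isomorphism ...
    Function.Bijective δ ∧
    -- ... consequently `H⁰(g̃) = H¹(g̃) = 0` ...
    Subsingleton H0g ∧ Subsingleton H1g ∧
    -- ... hence the anchor induces `H⁰(ℙ¹, A^{tw}) ≅ H⁰(ℙ¹, T_{ℙ¹})` :
    Function.Bijective f₂ := by
  have hδinj : Function.Injective δ := by
    intro a b hab
    apply ιL.injective
    have := congrArg ιΩ hab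
    rw [hδ, hδ] at this
    exact mul_left_cancel₀ hk this
  have hδsurj : Function.Surjective δ := by
    intro w
    refine ⟨ιL.symm (ιΩ w / k), ?_⟩
    apply ιΩ.injective
    rw [hδ, LinearEquiv.apply_symm_apply]
    field_simp
  have hδbij : Function.Bijective δ := ⟨hδinj, hδsurj⟩
  -- H0g subsingleton
  have hH0g : Subsingleton H0g := by
    constructor
    intro a b
    have h2 : e₂ a = e₂ b := by
      apply hδinj
      have ha : δ (e₂ a) = 0 := hex₂.apply_apply_eq_zero a
      have hb : δ (e₂ b) = 0 := hex₂.apply_apply_eq_zero b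
      rw [ha, hb]
    have : e₂ (a - b) = 0 := by rw [map_sub, h2, sub_self]
    obtain ⟨w, hw⟩ := (hex₁ (a - b)).mp this
    have hw0 : w = 0 := Subsingleton.elim w 0
    rw [hw0, map_zero] at hw
    exact sub_eq_zero.mp hw.symm
  -- H1g subsingleton
  have he₃zero : ∀ x, e₃ x = 0 := by
    intro x
    obtain ⟨v, hv⟩ := hδsurj x
    rw [← hv]
    exact hex₃.apply_apply_eq_zero v
  have hH1g : Subsingleton H1g := by
    constructor
    intro a b
    have h4 : e₄ (a - b) = 0 := Subsingleton.elim _ _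
    obtain ⟨w, hw⟩ := (hex₄ (a - b)).mp h4
    rw [he₃zero] at hw
    exact sub_eq_zero.mp hw.symm
  refine ⟨hδbij, hH0g, hH1g, ?_, ?_⟩
  · intro a b hab
    have : f₂ (a - b) = 0 := by rw [map_sub, hab, sub_self]
    obtain ⟨w, hw⟩ := (hfex₁ (a - b)).mp this
    have hw0 : w = 0 := Subsingleton.elim w 0
    rw [hw0, map_zero] at hw
    exact sub_eq_zero.mp hw.symm
  · intro t
    have : f₃ t = 0 := Subsingleton.elim _ _
    exact (hfex₂ t).mp this
end
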